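/- Let A be a noetherian ring complete with respect to an ideal I, S a profinite set, and let J, J' be closed ideals of C(S,A) such that for every s ∈ S the fiber ideals satisfy J'_s ⊆ J_s. Then J' ⊆ J. In particular, a closed ideal of C(S,A) is determined by its fibers. -/

import Mathlib

open Classical in
/-- Indicator function of a clopen set as a continuous map. -/
noncomputable def cInd {S : Type*} [TopologicalSpace S] (A : Type*) [CommRing A]
    [TopologicalSpace A] [IsTopologicalRing A] (V : Set S) (hV : IsClopen V) : C(S, A) :=
  ⟨fun s => if s ∈ V then 1 else 0, by
    apply IsLocallyConstant.continuous
    intro U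
    have : (fun s => if s ∈ V then (1:A) else 0) ⁻¹' U =
        if (1:A) ∈ U then (if (0:A) ∈ U then Set.univ else V)
        else (if (0:A) ∈ U then Vᶜ else ∅) := by
      ext s
      by_cases hs : s ∈ V <;> split_ifs <;> simp_all [Set.mem_preimage]
    rw [this]
    split_ifs
    · exact isOpen_univ
    · exact hV.2
    · exact hV.compl.2
    · exact isOpen_empty⟩

lemma cInd_apply_pos {S : Type*} [TopologicalSpace S] (A : Type*) [CommRing A]
    [TopologicalSpace A] [IsTopologicalRing A] {V : Set S} (hV : IsClopen V) {s : S}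
    (hs : s ∈ V) : cInd A V hV s = 1 := by simp [cInd, hs]

lemma cInd_apply_neg {S : Type*} [TopologicalSpace S] (A : Type*) [CommRing A]
    [TopologicalSpace A] [IsTopologicalRing A] {V : Set S} (hV : IsClopen V) {s : S}
    (hs : s ∉ V) : cInd A V hV s = 0 := by simp [cInd, hs]

/-- Binary-gluing lemma along a list of clopen sets. -/
lemma glue_list {S A ι : Type*} [TopologicalSpace S] [CommRing A] [TopologicalSpace A]
    [IsTopologicalRing A] (L : List S) (W : S → Set S) (hW : ∀ s, IsClopen (W s))
    (F : S → ι → C(S, A)) :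
    ∃ G : ι → C(S, A),
      (∀ P : Ideal C(S, A), (∀ t a, F t a ∈ P) → ∀ a, G a ∈ P) ∧
      (∀ s, (∃ x ∈ L, s ∈ W x) → ∃ t, s ∈ W t ∧ ∀ a, G a s = F t a s) := by
  induction L with
  | nil => exact ⟨fun _ => 0, fun P _ a => P.zero_mem, fun s hs => by simp at hs⟩
  | cons x L ih =>
    obtain ⟨G', hG'P, hG's⟩ := ih
    refine ⟨fun a => cInd A (W x) (hW x) * F x a + (1 - cInd A (W x) (hW x)) * G' a, ?_, ?_⟩
    · intro P hP a
      exact P.add_mem (P.mul_mem_left _ (hP x a)) (P.mul_mem_left _ (hG'P P hP a))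
    · intro s hs
      by_cases hx : s ∈ W x
      · refine ⟨x, hx, fun a => ?_⟩
        simp [cInd_apply_pos A (hW x) hx]
      · obtain ⟨y, hy, hsy⟩ := hs
        rcases List.mem_cons.mp hy with rfl | hyL
        · exact absurd hsy hx
        · obtain ⟨t, ht, htv⟩ := hG's s ⟨y, hyL, hsy⟩
          refine ⟨t, ht, fun a => ?_⟩
          simp [cInd_apply_neg A (hW x) hx, htv a]

/-- Representation of an element of `I^(n+k)` with coefficients in `I^k` over generators
of `I^n`. -/
lemma rep_lemma {A : Type*} [CommRing A] (I : Ideal A) (T : Finset A) {n : ℕ}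
    (hT : Ideal.span (↑T : Set A) = I ^ n) (k : ℕ) {x : A} (hx : x ∈ I ^ (n + k)) :
    ∃ c : A → A, (∀ a ∈ T, c a ∈ I ^ k) ∧ x = ∑ a ∈ T, c a * a := by
  have hx' : x ∈ I ^ k * Ideal.span (↑T : Set A) := by
    rw [hT, ← pow_add, add_comm k n]; exact hx
  refine Submodule.mul_induction_on hx' ?_ ?_
  · intro m hm r hr
    obtain ⟨d, -, hd⟩ := Submodule.mem_span_finset.mp hr
    refine ⟨fun a => m * d a, fun a _ => Ideal.mul_mem_right _ _ hm, ?_⟩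
    rw [← hd, Finset.mul_sum]
    exact Finset.sum_congr rfl fun a _ => by rw [smul_eq_mul, mul_assoc]
  · rintro x y ⟨c, hc1, rfl⟩ ⟨c', hc'1, rfl⟩
    refine ⟨fun a => c a + c' a, fun a ha => add_mem (hc1 a ha) (hc'1 a ha), ?_⟩
    rw [← Finset.sum_add_distrib]
    exact Finset.sum_congr rfl fun a _ => (add_mul _ _ _).symm

lemma pow_clopen {A : Type*} [CommRing A] [TopologicalSpace A] [IsTopologicalRing A]
    {I : Ideal A} (hA : IsAdic I) (r : ℕ) : IsClopen ((I ^ r : Ideal A) : Set A) := by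
  have hopen : IsOpen ((I ^ r : Ideal A) : Set A) := (isAdic_iff.mp hA).1 r
  exact ⟨AddSubgroup.isClosed_of_isOpen (I ^ r).toAddSubgroup hopen, hopen⟩

/-- A continuous function all of whose values lie in `I^n` lies in `I^n · C(S,A)`. -/
lemma mem_map_of_forall_mem {A : Type*} [CommRing A] [IsNoetherianRing A] [TopologicalSpace A]
    [IsTopologicalRing A] (I : Ideal A) (hA : IsAdic I) [IsAdicComplete I A]
    {S : Type*} [TopologicalSpace S] [CompactSpace S]
    (n : ℕ) (h : C(S, A)) (hh : ∀ s, h s ∈ I ^ n) :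
    h ∈ Ideal.map (algebraMap A C(S, A)) (I ^ n) := by
  obtain ⟨T, hT⟩ := IsNoetherian.noetherian (I ^ n)
  have step : ∀ (k : ℕ) (H : A → C(S, A)),
      (∀ s, h s - ∑ a ∈ T, a * H a s ∈ I ^ (n + k)) →
      ∃ H' : A → C(S, A), (∀ a ∈ T, ∀ s, H' a s - H a s ∈ I ^ k) ∧
        (∀ s, h s - ∑ a ∈ T, a * H' a s ∈ I ^ (n + (k + 1))) := by
    intro k H hH
    set r : C(S, A) := h - ∑ a ∈ T, algebraMap A C(S, A) a * H a with hrdef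
    have hrs : ∀ s, r s = h s - ∑ a ∈ T, a * H a s := by
      intro s; simp [hrdef]
    have hrep : ∀ s : S, ∃ c : A → A, (∀ a ∈ T, c a ∈ I ^ k) ∧ r s = ∑ a ∈ T, c a * a :=
      fun s => rep_lemma I T hT k (by rw [hrs]; exact hH s)
    choose c hc1 hc2 using hrep
    set W : S → Set S := fun t => {x | r x - r t ∈ I ^ (n + (k + 1))} with hWdef
    have hWclopen : ∀ t, IsClopen (W t) := by
      intro t
      have : W t = (fun x => r x - r t) ⁻¹' ((I ^ (n + (k+1)) : Ideal A) : Set A) := rfl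
      rw [this]
      exact (pow_clopen hA _).preimage (r.continuous.sub continuous_const)
    have hWmem : ∀ t, t ∈ W t := by
      intro t
      show r t - r t ∈ I ^ (n + (k + 1))
      rw [sub_self]; exact zero_mem _
    obtain ⟨u, hu⟩ := isCompact_univ.elim_finite_subcover W (fun t => (hWclopen t).2)
      (fun s _ => Set.mem_iUnion.mpr ⟨s, hWmem s⟩)
    obtain ⟨G, hGP, hGs⟩ := glue_list u.toList W hWclopen
      (fun t a => algebraMap A C(S, A) (c t a))
    have hcover : ∀ s : S, ∃ x ∈ u.toList, s ∈ W x := by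
      intro s
      obtain ⟨x, hx, hsx⟩ := Set.mem_iUnion₂.mp (hu (Set.mem_univ s))
      exact ⟨x, Finset.mem_toList.mpr hx, hsx⟩
    refine ⟨fun a => H a + G a, ?_, ?_⟩
    · intro a ha s
      obtain ⟨t, _, hGv⟩ := hGs s (hcover s)
      have h1 : (H a + G a) s - H a s = G a s := by simp
      rw [h1, hGv a]
      simpa using hc1 t a ha
    · intro s
      obtain ⟨t, hst, hGv⟩ := hGs s (hcover s)
      have e1 : h s - ∑ a ∈ T, a * (H a + G a) s = r s - ∑ a ∈ T, a * c t a := by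
        rw [hrs]
        have key : ∀ a ∈ T, a * (H a + G a) s = a * H a s + a * c t a := by
          intro a _
          have h2 := hGv a
          simp only [ContinuousMap.add_apply] at h2 ⊢
          have h3 : G a s = c t a := by simpa using h2
          rw [h3, mul_add]
        rw [Finset.sum_congr rfl key, Finset.sum_add_distrib]
        ring
      have e2 : r s - ∑ a ∈ T, a * c t a = r s - r t := by
        rw [hc2 t]
        congr 1
        exact Finset.sum_congr rfl fun a _ => mul_comm _ _
      rw [e1, e2]
      exact hst
  choose step' hs1 hs2 using step
  let Hs : ∀ k : ℕ, {H : A → C(S, A) // ∀ s, h s - ∑ a ∈ T, a * H a s ∈ I ^ (n + k)} :=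
    fun k =>
      Nat.rec
        (motive := fun k => {H : A → C(S, A) // ∀ s, h s - ∑ a ∈ T, a * H a s ∈ I ^ (n + k)})
        ⟨fun _ => 0, fun s => by simpa using hh s⟩
        (fun k p => ⟨step' k p.1 p.2, hs2 k p.1 p.2⟩) k
  have hinc : ∀ k, ∀ a ∈ T, ∀ s, (Hs (k+1)).1 a s - (Hs k).1 a s ∈ I ^ k :=
    fun k => hs1 k (Hs k).1 (Hs k).2
  have hdiff : ∀ k l, k ≤ l → ∀ a ∈ T, ∀ s, (Hs l).1 a s - (Hs k).1 a s ∈ I ^ k := by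
    intro k l hkl
    induction l, hkl using Nat.le_induction with
    | base =>
      intro a _ s
      rw [sub_self]; exact zero_mem _
    | succ l hkl ih =>
      intro a ha s
      have h1 := hinc l a ha s
      have h2 := ih a ha s
      have e : (Hs (l+1)).1 a s - (Hs k).1 a s
          = ((Hs (l+1)).1 a s - (Hs l).1 a s) + ((Hs l).1 a s - (Hs k).1 a s) := by ring
      rw [e]
      exact add_mem (Ideal.pow_le_pow_right hkl h1) h2
  have htop : ∀ m : ℕ, (I ^ m • ⊤ : Submodule A A) = I ^ m := fun m => by
    rw [Ideal.smul_eq_mul, Ideal.mul_top]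
  have key : ∀ a : A, ∃ g : C(S, A), a ∈ T → ∀ k s, g s - (Hs k).1 a s ∈ I ^ k := by
    intro a
    by_cases ha : a ∈ T
    · have hlim : ∀ s : S, ∃ L : A, ∀ k, L - (Hs k).1 a s ∈ I ^ k := by
        intro s
        obtain ⟨L, hL⟩ := IsPrecomplete.prec (inferInstance : IsPrecomplete I A)
          (f := fun k => (Hs k).1 a s) (fun {m l} hml => by
            rw [SModEq.sub_mem, htop m]
            have h1 := hdiff m l hml a ha s
            have e : (Hs m).1 a s - (Hs l).1 a s = -((Hs l).1 a s - (Hs m).1 a s) := by ring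
            rw [e]; exact neg_mem h1)
        refine ⟨L, fun k => ?_⟩
        have h1 := (SModEq.sub_mem).mp (hL k)
        rw [htop k] at h1
        have e : L - (Hs k).1 a s = -((Hs k).1 a s - L) := by ring
        rw [e]; exact neg_mem h1
      choose L hL using hlim
      have hcont : Continuous L := by
        rw [continuous_iff_continuousAt]
        intro s0
        rw [ContinuousAt, Filter.tendsto_def]
        intro U hU
        have hV : (fun y : A => y + L s0) ⁻¹' U ∈ nhds (0 : A) := by
          have hc : ContinuousAt (fun y : A => y + L s0) 0 := (continuous_add_right _).continuousAt
          apply hc.preimage_mem_nhds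
          simpa using hU
        obtain ⟨m, hm⟩ := (isAdic_iff.mp hA).2 _ hV
        have hNopen : IsOpen {x : S | (Hs m).1 a x - (Hs m).1 a s0 ∈ I ^ m} := by
          have e : {x : S | (Hs m).1 a x - (Hs m).1 a s0 ∈ I ^ m}
              = (fun x => (Hs m).1 a x - (Hs m).1 a s0) ⁻¹' ((I ^ m : Ideal A) : Set A) := rfl
          rw [e]
          exact IsOpen.preimage (((Hs m).1 a).continuous.sub continuous_const) (pow_clopen hA m).2
        apply Filter.mem_of_superset (hNopen.mem_nhds (by simp))
        intro x hx
        have hmem : L x - L s0 ∈ (I ^ m : Ideal A) := by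
          have h1 := hL x m
          have h2 := hL s0 m
          have e : L x - L s0 = (L x - (Hs m).1 a x) + ((Hs m).1 a x - (Hs m).1 a s0)
              - (L s0 - (Hs m).1 a s0) := by ring
          rw [e]
          exact sub_mem (add_mem h1 hx) h2
        have h3 := hm hmem
        simpa using h3
      exact ⟨⟨L, hcont⟩, fun _ k s => hL s k⟩
    · exact ⟨0, fun h => absurd h ha⟩
  choose g hg using key
  have hfin : h = ∑ a ∈ T, algebraMap A C(S, A) a * g a := by
    ext s
    have hz : ∀ k, h s - ∑ a ∈ T, a * g a s ∈ I ^ k := by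
      intro k
      have e1 : h s - ∑ a ∈ T, a * (Hs k).1 a s ∈ I ^ (n + k) := (Hs k).2 s
      have e2 : ∑ a ∈ T, a * g a s - ∑ a ∈ T, a * (Hs k).1 a s ∈ I ^ k := by
        rw [← Finset.sum_sub_distrib]
        refine Submodule.sum_mem _ fun a ha => ?_
        rw [← mul_sub]
        exact Ideal.mul_mem_left _ _ (hg a ha k s)
      have e3 : h s - ∑ a ∈ T, a * g a s =
          (h s - ∑ a ∈ T, a * (Hs k).1 a s)
            - (∑ a ∈ T, a * g a s - ∑ a ∈ T, a * (Hs k).1 a s) := by ring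
      rw [e3]
      exact sub_mem (Ideal.pow_le_pow_right (Nat.le_add_left k n) e1) e2
    have hzero := IsHausdorff.haus (inferInstance : IsHausdorff I A)
      (h s - ∑ a ∈ T, a * g a s) (fun k => by rw [SModEq.zero, htop k]; exact hz k)
    have hsum : (∑ a ∈ T, algebraMap A C(S, A) a * g a) s = ∑ a ∈ T, a * g a s := by
      simp
    rw [hsum]
    exact sub_eq_zero.mp hzero
  rw [hfin]
  refine Submodule.sum_mem _ fun a ha => ?_
  exact Ideal.mul_mem_right _ _
    (Ideal.mem_map_of_mem _ (by rw [← hT]; exact Ideal.subset_span ha))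


/-- Evaluation at a point, as a ring homomorphism `C(S,A) →+* A`. -/
def cEvalHom (S : Type*) [TopologicalSpace S]
    (A : Type*) [CommRing A] [TopologicalSpace A] [IsTopologicalRing A] (s : S) :
    C(S, A) →+* A where
  toFun f := f s
  map_one' := rfl
  map_mul' _ _ := rfl
  map_zero' := rfl
  map_add' _ _ := rfl

/-- Let `A` be a noetherian ring complete with respect to an ideal `I` (with the `I`-adic
topology), `S` a profinite set, and let `J, J'` be closed ideals of `C(S,A)` (closedness
expressed by `J = ⋂ₙ (J + I^n·C(S,A))`) such that for every `s ∈ S` the fiber ideals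
satisfy `J'_s ⊆ J_s`.  Then `J' ⊆ J`: a closed ideal of `C(S,A)` is determined by its
fibers. -/
theorem closed_ideal_determined_by_fibers
    (A : Type*) [CommRing A] [IsNoetherianRing A] [TopologicalSpace A] [IsTopologicalRing A]
    (I : Ideal A) (hA : IsAdic I) [IsAdicComplete I A]
    (S : Type*) [TopologicalSpace S] [CompactSpace S] [T2Space S] [TotallyDisconnectedSpace S]
    (J J' : Ideal C(S, A))
    (hJclosed : ∀ g : C(S, A),
      (∀ n : ℕ, g ∈ J ⊔ Ideal.map (algebraMap A C(S, A)) (I ^ n)) → g ∈ J)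
    (hJ'closed : ∀ g : C(S, A),
      (∀ n : ℕ, g ∈ J' ⊔ Ideal.map (algebraMap A C(S, A)) (I ^ n)) → g ∈ J')
    (hfib : ∀ s : S, Ideal.map (cEvalHom S A s) J' ≤ Ideal.map (cEvalHom S A s) J) :
    J' ≤ J := by
  intro f hf
  apply hJclosed f
  intro n
  have hsurj : ∀ s : S, Function.Surjective (cEvalHom S A s) :=
    fun s a => ⟨ContinuousMap.const S a, rfl⟩
  have hpt : ∀ s : S, ∃ gs : C(S, A), gs ∈ J ∧ gs s = f s := by
    intro s
    have h1 : f s ∈ Ideal.map (cEvalHom S A s) J :=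
      hfib s (Ideal.mem_map_of_mem _ hf)
    obtain ⟨gs, hgJ, hgs⟩ := (Ideal.mem_map_iff_of_surjective _ (hsurj s)).mp h1
    exact ⟨gs, hgJ, hgs⟩
  choose g hgJ hgv using hpt
  set W : S → Set S := fun t => {x | f x - g t x ∈ I ^ n} with hWdef
  have hWclopen : ∀ t, IsClopen (W t) := by
    intro t
    have e : W t = (fun x => f x - g t x) ⁻¹' ((I ^ n : Ideal A) : Set A) := rfl
    rw [e]
    exact (pow_clopen hA n).preimage (f.continuous.sub (g t).continuous)
  have hWmem : ∀ t, t ∈ W t := by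
    intro t
    show f t - g t t ∈ I ^ n
    rw [hgv t, sub_self]; exact zero_mem _
  obtain ⟨u, hu⟩ := isCompact_univ.elim_finite_subcover W (fun t => (hWclopen t).2)
    (fun s _ => Set.mem_iUnion.mpr ⟨s, hWmem s⟩)
  obtain ⟨G, hGP, hGs⟩ := glue_list (ι := Unit) u.toList W hWclopen (fun t _ => g t)
  have hGJ : G () ∈ J := hGP J (fun t _ => hgJ t) ()
  have hvals : ∀ s, (f - G ()) s ∈ I ^ n := by
    intro s
    obtain ⟨x, hx, hsx⟩ := Set.mem_iUnion₂.mp (hu (Set.mem_univ s))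
    obtain ⟨t, hst, htv⟩ := hGs s ⟨x, Finset.mem_toList.mpr hx, hsx⟩
    have e : (f - G ()) s = f s - g t s := by
      simp [htv ()]
    rw [e]
    exact hst
  have hsplit : f = G () + (f - G ()) := by ring
  rw [hsplit]
  exact Submodule.add_mem _ (Submodule.mem_sup_left hGJ)
    (Submodule.mem_sup_right (mem_map_of_forall_mem I hA n _ hvals))
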